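/- For any finite-dimensional complex Hilbert spaces K₁, K₂, the map φ_{K₁,K₂} : B(K₁ ⊕ K₂ ⊕ ℂ) → B(K₁ ⊕ K₂ ⊕ ℂ) defined blockwise by φ(X)₁₁ = X₁₁ + Tr(X₂₂)·1, φ(X)₂₂ = X₂₂ᵀ + Tr(X₁₁)·1, φ(X)₁₃ = X₁₃, φ(X)₂₃ = X₃₂ᵀ, φ(X)₃₁ = X₃₁, φ(X)₃₂ = X₂₃ᵀ, φ(X)₃₃ = X₃₃, φ(X)₁₂ = φ(X)₂₁ = 0, is a positive map. -/

import Mathlib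

open scoped ComplexOrder
open Matrix

noncomputable section
namespace Paper

/-- A map between matrix algebras is positive if it sends positive semidefinite
matrices to positive semidefinite matrices. -/
def IsPosMap {m n : Type*} [Fintype m] [Fintype n]
    (φ : Matrix m m ℂ → Matrix n n ℂ) : Prop :=
  ∀ X : Matrix m m ℂ, X.PosSemidef → (φ X).PosSemidef

/-- The rank one operator `ηη*`, i.e. `ζ ↦ ⟨η, ζ⟩ η`. -/
def rankOne {m : Type*} (η : m → ℂ) : Matrix m m ℂ :=
  Matrix.vecMulVec η (star η)

/-- The Choi matrix `∑ E_{ij} ⊗ φ(E_{ij})` of a map `φ`. -/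
def choi {m n : Type*} [Fintype m] [DecidableEq m]
    (φ : Matrix m m ℂ → Matrix n n ℂ) : Matrix (m × n) (m × n) ℂ :=
  Matrix.of fun p q => φ (Matrix.single p.1 q.1 1) p.2 q.2

/-- A map is completely positive iff its Choi matrix is positive semidefinite. -/
def IsCP {m n : Type*} [Fintype m] [DecidableEq m] [Fintype n]
    (φ : Matrix m m ℂ → Matrix n n ℂ) : Prop :=
  (choi φ).PosSemidef

/-- A map is completely copositive iff `X ↦ φ(Xᵀ)` is completely positive. -/
def IsCCP {m n : Type*} [Fintype m] [DecidableEq m] [Fintype n]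
    (φ : Matrix m m ℂ → Matrix n n ℂ) : Prop :=
  IsCP fun X => φ Xᵀ

/-- A map is decomposable iff it is the sum of a completely positive and a
completely copositive (linear) map. -/
def Decomposable {m n : Type*} [Fintype m] [DecidableEq m] [Fintype n]
    (φ : Matrix m m ℂ → Matrix n n ℂ) : Prop :=
  ∃ φ₁ φ₂ : Matrix m m ℂ →ₗ[ℂ] Matrix n n ℂ,
    IsCP (⇑φ₁) ∧ IsCCP (⇑φ₂) ∧ ∀ X, φ X = φ₁ X + φ₂ X

/-- The ampliation `id_{M₂(ℂ)} ⊗ φ`. -/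
def ampl2 {m n : Type*} (φ : Matrix m m ℂ → Matrix n n ℂ)
    (Y : Matrix (Fin 2 × m) (Fin 2 × m) ℂ) : Matrix (Fin 2 × n) (Fin 2 × n) ℂ :=
  Matrix.of fun p q => φ (Matrix.of fun a b => Y (p.1, a) (q.1, b)) p.2 q.2

/-- The ampliation `tran_{M₂(ℂ)} ⊗ φ`. -/
def ampl2T {m n : Type*} (φ : Matrix m m ℂ → Matrix n n ℂ)
    (Y : Matrix (Fin 2 × m) (Fin 2 × m) ℂ) : Matrix (Fin 2 × n) (Fin 2 × n) ℂ :=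
  Matrix.of fun p q => φ (Matrix.of fun a b => Y (q.1, a) (p.1, b)) p.2 q.2

/-- `φ` is 2-positive if `id_{M₂(ℂ)} ⊗ φ` is positive. -/
def Is2Pos {m n : Type*} [Fintype m] [Fintype n]
    (φ : Matrix m m ℂ → Matrix n n ℂ) : Prop :=
  IsPosMap (ampl2 φ)

/-- `φ` is 2-copositive if `tran_{M₂(ℂ)} ⊗ φ` is positive. -/
def Is2Copos {m n : Type*} [Fintype m] [Fintype n]
    (φ : Matrix m m ℂ → Matrix n n ℂ) : Prop :=
  IsPosMap (ampl2T φ)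

/-- A positive map `φ` is exposed if every positive (linear) map `ψ` vanishing
(in the sense `⟨y, ψ(ηη*) y⟩ = 0`) wherever `φ` vanishes is a nonnegative
multiple of `φ`. -/
def IsExposed {m n : Type*} [Fintype m] [Fintype n]
    (φ : Matrix m m ℂ → Matrix n n ℂ) : Prop :=
  IsPosMap φ ∧
    ∀ ψ : Matrix m m ℂ →ₗ[ℂ] Matrix n n ℂ, IsPosMap ⇑ψ →
      (∀ (η : m → ℂ) (y : n → ℂ),
        star y ⬝ᵥ (φ (rankOne η)).mulVec y = 0 →
          star y ⬝ᵥ (ψ (rankOne η)).mulVec y = 0) →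
      ∃ c : ℝ, 0 ≤ c ∧ ∀ X, ψ X = (c : ℂ) • φ X

/-- A positive map `φ` is optimal if there is no nonzero completely positive map
`ψ` with `φ − ψ` positive. -/
def IsOptimal {m n : Type*} [Fintype m] [DecidableEq m] [Fintype n]
    (φ : Matrix m m ℂ → Matrix n n ℂ) : Prop :=
  ¬∃ ψ : Matrix m m ℂ →ₗ[ℂ] Matrix n n ℂ,
      ψ ≠ 0 ∧ IsCP (⇑ψ) ∧ IsPosMap fun X => φ X - ψ X

/-- The index type of the direct sum `ℂᵃ ⊕ ℂᵇ ⊕ ℂ`. -/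
abbrev TI (a b : ℕ) := Fin a ⊕ (Fin b ⊕ Unit)

/-- The index of the distinguished one-dimensional summand. -/
def tidx {a b : ℕ} : TI a b := Sum.inr (Sum.inr ())

/-- Block `X₁₁` of a matrix on `ℂᵃ ⊕ ℂᵇ ⊕ ℂ`. -/
def blk11 {a b : ℕ} (X : Matrix (TI a b) (TI a b) ℂ) : Matrix (Fin a) (Fin a) ℂ :=
  Matrix.of fun i j => X (Sum.inl i) (Sum.inl j)

/-- Block `X₂₂`. -/
def blk22 {a b : ℕ} (X : Matrix (TI a b) (TI a b) ℂ) : Matrix (Fin b) (Fin b) ℂ :=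
  Matrix.of fun i j => X (Sum.inr (Sum.inl i)) (Sum.inr (Sum.inl j))

/-- Block `X₁₃`, viewed as a column vector. -/
def blk13 {a b : ℕ} (X : Matrix (TI a b) (TI a b) ℂ) : Fin a → ℂ :=
  fun i => X (Sum.inl i) tidx

/-- Block `X₃₁` (equivalently, the vector `X₃₁ᵀ`). -/
def blk31 {a b : ℕ} (X : Matrix (TI a b) (TI a b) ℂ) : Fin a → ℂ :=
  fun i => X tidx (Sum.inl i)

/-- Block `X₂₃`, viewed as a column vector. -/
def blk23 {a b : ℕ} (X : Matrix (TI a b) (TI a b) ℂ) : Fin b → ℂ :=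
  fun i => X (Sum.inr (Sum.inl i)) tidx

/-- Block `X₃₂` (equivalently, the vector `X₃₂ᵀ`). -/
def blk32 {a b : ℕ} (X : Matrix (TI a b) (TI a b) ℂ) : Fin b → ℂ :=
  fun i => X tidx (Sum.inr (Sum.inl i))

/-- `P` is the orthogonal projection onto the range of `A`: it is Hermitian,
idempotent, and has the same range as `A`. -/
def IsOrthProjOnRange {n m : Type*} [Fintype n] [Fintype m]
    (P : Matrix n n ℂ) (A : Matrix n m ℂ) : Prop :=
  P.IsHermitian ∧ P * P = P ∧
    LinearMap.range P.mulVecLin = LinearMap.range A.mulVecLin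

/-- The merging of the maps `φ₁`, `φ₂` by means of the operators `B₁, C₁, B₂, C₂`,
the functionals `ω₁, ω₂`, with `P₁, P₂` the orthogonal projections onto the ranges
of `φ₁(1)`, `φ₂(1)`. -/
def merging {k₁ k₂ h₁ h₂ : ℕ}
    (φ₁ : Matrix (Fin k₁) (Fin k₁) ℂ →ₗ[ℂ] Matrix (Fin h₁) (Fin h₁) ℂ)
    (φ₂ : Matrix (Fin k₂) (Fin k₂) ℂ →ₗ[ℂ] Matrix (Fin h₂) (Fin h₂) ℂ)
    (B₁ C₁ : Matrix (Fin h₁) (Fin k₁) ℂ) (B₂ C₂ : Matrix (Fin h₂) (Fin k₂) ℂ)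
    (ω₁ : Matrix (Fin k₁) (Fin k₁) ℂ →ₗ[ℂ] ℂ) (ω₂ : Matrix (Fin k₂) (Fin k₂) ℂ →ₗ[ℂ] ℂ)
    (P₁ : Matrix (Fin h₁) (Fin h₁) ℂ) (P₂ : Matrix (Fin h₂) (Fin h₂) ℂ)
    (X : Matrix (TI k₁ k₂) (TI k₁ k₂) ℂ) : Matrix (TI h₁ h₂) (TI h₁ h₂) ℂ :=
  Matrix.of fun p q =>
    match p, q with
    | Sum.inl a, Sum.inl b => φ₁ (blk11 X) a b + ω₂ (blk22 X) * P₁ a b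
    | Sum.inl _, Sum.inr (Sum.inl _) => 0
    | Sum.inl a, Sum.inr (Sum.inr _) => (B₁.mulVec (blk13 X) + C₁.mulVec (blk31 X)) a
    | Sum.inr (Sum.inl _), Sum.inl _ => 0
    | Sum.inr (Sum.inl a), Sum.inr (Sum.inl b) => φ₂ (blk22 X) a b + ω₁ (blk11 X) * P₂ a b
    | Sum.inr (Sum.inl a), Sum.inr (Sum.inr _) => (B₂.mulVec (blk23 X) + C₂.mulVec (blk32 X)) a
    | Sum.inr (Sum.inr _), Sum.inl b =>
        (Matrix.vecMul (blk31 X) B₁ᴴ + Matrix.vecMul (blk13 X) C₁ᴴ) b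
    | Sum.inr (Sum.inr _), Sum.inr (Sum.inl b) =>
        (Matrix.vecMul (blk32 X) B₂ᴴ + Matrix.vecMul (blk23 X) C₂ᴴ) b
    | Sum.inr (Sum.inr _), Sum.inr (Sum.inr _) => X tidx tidx

/-- The quantity `μᵢ(η, y) = √⟨y, φᵢ(ηη*) y⟩`. -/
def muQ {k h : ℕ} (φ : Matrix (Fin k) (Fin k) ℂ →ₗ[ℂ] Matrix (Fin h) (Fin h) ℂ)
    (η : Fin k → ℂ) (y : Fin h → ℂ) : ℝ :=
  Real.sqrt (star y ⬝ᵥ (φ (rankOne η)).mulVec y).re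

/-- The quantity `εᵢ(η, y) = |⟨y, Bη⟩| + |⟨y, C η̄⟩|`. -/
def epsQ {k h : ℕ} (B C : Matrix (Fin h) (Fin k) ℂ) (η : Fin k → ℂ) (y : Fin h → ℂ) : ℝ :=
  ‖star y ⬝ᵥ B.mulVec η‖ + ‖star y ⬝ᵥ C.mulVec (star η)‖

/-- The quantity `δᵢ(η, y) = √(μᵢ(η,y)² − εᵢ(η,y)²)`. -/
def deltaQ {k h : ℕ} (φ : Matrix (Fin k) (Fin k) ℂ →ₗ[ℂ] Matrix (Fin h) (Fin h) ℂ)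
    (B C : Matrix (Fin h) (Fin k) ℂ) (η : Fin k → ℂ) (y : Fin h → ℂ) : ℝ :=
  Real.sqrt (muQ φ η y ^ 2 - epsQ B C η y ^ 2)

/-- The quantity `σᵢ(η, y) = √(ωᵢ(ηη*))·‖P y‖`. -/
def sigmaQ {k h : ℕ} (ω : Matrix (Fin k) (Fin k) ℂ →ₗ[ℂ] ℂ)
    (P : Matrix (Fin h) (Fin h) ℂ) (η : Fin k → ℂ) (y : Fin h → ℂ) : ℝ :=
  Real.sqrt (ω (rankOne η)).re * Real.sqrt (star (P.mulVec y) ⬝ᵥ P.mulVec y).re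

/-- The map `φ_{K₁,K₂}` given blockwise by `φ(X)₁₁ = X₁₁ + Tr(X₂₂)·1`,
`φ(X)₂₂ = X₂₂ᵀ + Tr(X₁₁)·1`, `φ(X)₁₃ = X₁₃`, `φ(X)₂₃ = X₃₂ᵀ`, `φ(X)₃₁ = X₃₁`,
`φ(X)₃₂ = X₂₃ᵀ`, `φ(X)₃₃ = X₃₃`, `φ(X)₁₂ = φ(X)₂₁ = 0`. -/
def phiMO (k₁ k₂ : ℕ) (X : Matrix (TI k₁ k₂) (TI k₁ k₂) ℂ) :
    Matrix (TI k₁ k₂) (TI k₁ k₂) ℂ :=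
  Matrix.of fun p q =>
    match p, q with
    | Sum.inl a, Sum.inl b =>
        X (Sum.inl a) (Sum.inl b) +
          (if a = b then ∑ i : Fin k₂, X (Sum.inr (Sum.inl i)) (Sum.inr (Sum.inl i)) else 0)
    | Sum.inl _, Sum.inr (Sum.inl _) => 0
    | Sum.inl a, Sum.inr (Sum.inr _) => X (Sum.inl a) tidx
    | Sum.inr (Sum.inl _), Sum.inl _ => 0
    | Sum.inr (Sum.inl a), Sum.inr (Sum.inl b) =>
        X (Sum.inr (Sum.inl b)) (Sum.inr (Sum.inl a)) +
          (if a = b then ∑ i : Fin k₁, X (Sum.inl i) (Sum.inl i) else 0)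
    | Sum.inr (Sum.inl a), Sum.inr (Sum.inr _) => X tidx (Sum.inr (Sum.inl a))
    | Sum.inr (Sum.inr _), Sum.inl b => X tidx (Sum.inl b)
    | Sum.inr (Sum.inr _), Sum.inr (Sum.inl b) => X (Sum.inr (Sum.inl b)) tidx
    | Sum.inr (Sum.inr _), Sum.inr (Sum.inr _) => X tidx tidx

/-- The map `Ω_{K₁,K₂}` given blockwise by `Ω(X)₁₁ = (Tr X₁₁ + Tr X₂₂)·1`,
`Ω(X)₂₂ = X₂₂ᵀ + Tr(X₁₁)·1`, `Ω(X)₁₃ = X₁₃`, `Ω(X)₂₃ = X₃₂ᵀ`, `Ω(X)₃₁ = X₃₁`,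
`Ω(X)₃₂ = X₂₃ᵀ`, `Ω(X)₃₃ = X₃₃`, `Ω(X)₁₂ = Ω(X)₂₁ = 0`. -/
def OmegaMap (k₁ k₂ : ℕ) (X : Matrix (TI k₁ k₂) (TI k₁ k₂) ℂ) :
    Matrix (TI k₁ k₂) (TI k₁ k₂) ℂ :=
  Matrix.of fun p q =>
    match p, q with
    | Sum.inl a, Sum.inl b =>
        if a = b then
          (∑ i : Fin k₁, X (Sum.inl i) (Sum.inl i)) +
            ∑ i : Fin k₂, X (Sum.inr (Sum.inl i)) (Sum.inr (Sum.inl i))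
        else 0
    | Sum.inl _, Sum.inr (Sum.inl _) => 0
    | Sum.inl a, Sum.inr (Sum.inr _) => X (Sum.inl a) tidx
    | Sum.inr (Sum.inl _), Sum.inl _ => 0
    | Sum.inr (Sum.inl a), Sum.inr (Sum.inl b) =>
        X (Sum.inr (Sum.inl b)) (Sum.inr (Sum.inl a)) +
          (if a = b then ∑ i : Fin k₁, X (Sum.inl i) (Sum.inl i) else 0)
    | Sum.inr (Sum.inl a), Sum.inr (Sum.inr _) => X tidx (Sum.inr (Sum.inl a))
    | Sum.inr (Sum.inr _), Sum.inl b => X tidx (Sum.inl b)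
    | Sum.inr (Sum.inr _), Sum.inr (Sum.inl b) => X (Sum.inr (Sum.inl b)) tidx
    | Sum.inr (Sum.inr _), Sum.inr (Sum.inr _) => X tidx tidx

namespace S3

open Complex

variable {k₁ k₂ : ℕ}

/-- Padded vector supported on the first block. -/
def u1 (v : TI k₁ k₂ → ℂ) : TI k₁ k₂ → ℂ := Sum.elim (fun a => v (Sum.inl a)) 0

/-- Padded conjugated vector supported on the second block. -/
def u2 (v : TI k₁ k₂ → ℂ) : TI k₁ k₂ → ℂ :=
  Sum.elim 0 (Sum.elim (fun i => (starRingEnd ℂ) (v (Sum.inr (Sum.inl i)))) 0)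

/-- Padded scalar supported on the third block. -/
def w3 (v : TI k₁ k₂ → ℂ) : TI k₁ k₂ → ℂ :=
  Sum.elim 0 (Sum.elim 0 fun _ => v tidx)

/-- Padded conjugated scalar supported on the third block. -/
def w3' (v : TI k₁ k₂ → ℂ) : TI k₁ k₂ → ℂ :=
  Sum.elim 0 (Sum.elim 0 fun _ => (starRingEnd ℂ) (v tidx))

/-- Basis vector of the first block. -/
def d1 (a : Fin k₁) : TI k₁ k₂ → ℂ := Sum.elim (fun b => if b = a then 1 else 0) 0

/-- Basis vector of the second block. -/
def d2 (i : Fin k₂) : TI k₁ k₂ → ℂ :=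
  Sum.elim 0 (Sum.elim (fun j => if j = i then 1 else 0) 0)

lemma tr22 (X : Matrix (TI k₁ k₂) (TI k₁ k₂) ℂ) (v : TI k₁ k₂ → ℂ) :
    star (u2 v) ⬝ᵥ X *ᵥ u2 v =
      ∑ x : Fin k₂, ∑ y : Fin k₂,
        (starRingEnd ℂ) (v (Sum.inr (Sum.inl x))) *
          X (Sum.inr (Sum.inl y)) (Sum.inr (Sum.inl x)) * v (Sum.inr (Sum.inl y)) := by
  simp only [dotProduct, mulVec, Fintype.sum_sum_type, Finset.univ_unique,
    Finset.sum_singleton, u2, Sum.elim_inl, Sum.elim_inr, Pi.star_apply, Pi.zero_apply,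
    star_zero, RCLike.star_def, _root_.map_zero, Complex.conj_conj, mul_zero, zero_mul, add_zero, zero_add,
    Finset.sum_const_zero, Finset.mul_sum]
  rw [Finset.sum_comm]
  exact Finset.sum_congr rfl fun x _ => Finset.sum_congr rfl fun y _ => by ring

lemma d1_diag (X : Matrix (TI k₁ k₂) (TI k₁ k₂) ℂ) (a : Fin k₁) :
    star (d1 a : TI k₁ k₂ → ℂ) ⬝ᵥ X *ᵥ d1 a = X (Sum.inl a) (Sum.inl a) := by
  simp only [dotProduct, mulVec, Fintype.sum_sum_type, Finset.univ_unique,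
    Finset.sum_singleton, d1, Sum.elim_inl, Sum.elim_inr, Pi.star_apply, Pi.zero_apply,
    star_zero, RCLike.star_def, _root_.map_zero, _root_.map_one, apply_ite (starRingEnd ℂ),
    ite_mul, mul_ite, one_mul, mul_one, zero_mul, mul_zero, Finset.sum_ite_eq,
    Finset.sum_ite_eq', Finset.mem_univ, if_true, add_zero, zero_add, Finset.sum_const_zero]

lemma d2_diag (X : Matrix (TI k₁ k₂) (TI k₁ k₂) ℂ) (i : Fin k₂) :
    star (d2 i : TI k₁ k₂ → ℂ) ⬝ᵥ X *ᵥ d2 i = X (Sum.inr (Sum.inl i)) (Sum.inr (Sum.inl i)) := by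
  simp only [dotProduct, mulVec, Fintype.sum_sum_type, Finset.univ_unique,
    Finset.sum_singleton, d2, Sum.elim_inl, Sum.elim_inr, Pi.star_apply, Pi.zero_apply,
    star_zero, RCLike.star_def, _root_.map_zero, _root_.map_one, apply_ite (starRingEnd ℂ),
    ite_mul, mul_ite, one_mul, mul_one, zero_mul, mul_zero, Finset.sum_ite_eq,
    Finset.sum_ite_eq', Finset.mem_univ, if_true, add_zero, zero_add, Finset.sum_const_zero]

lemma L5 (X : Matrix (TI k₁ k₂) (TI k₁ k₂) ℂ) (v : TI k₁ k₂ → ℂ) :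
    star (w3' v) ⬝ᵥ X *ᵥ u2 v =
      ∑ x : Fin k₂, (starRingEnd ℂ) (v (Sum.inr (Sum.inl x))) *
        X (Sum.inr (Sum.inr ())) (Sum.inr (Sum.inl x)) * v (Sum.inr (Sum.inr ())) := by
  simp only [dotProduct, mulVec, Fintype.sum_sum_type, Finset.univ_unique,
    Finset.sum_singleton, u2, w3', tidx, Sum.elim_inl, Sum.elim_inr, Pi.star_apply,
    Pi.zero_apply, star_zero, RCLike.star_def, _root_.map_zero, Complex.conj_conj,
    mul_zero, zero_mul, add_zero, zero_add, Finset.sum_const_zero, Finset.mul_sum]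
  exact Finset.sum_congr rfl fun x _ => by ring

lemma L6 (X : Matrix (TI k₁ k₂) (TI k₁ k₂) ℂ) (v : TI k₁ k₂ → ℂ) :
    star (u2 v) ⬝ᵥ X *ᵥ w3' v =
      ∑ x : Fin k₂, (starRingEnd ℂ) (v (Sum.inr (Sum.inr ()))) *
        X (Sum.inr (Sum.inl x)) (Sum.inr (Sum.inr ())) * v (Sum.inr (Sum.inl x)) := by
  simp only [dotProduct, mulVec, Fintype.sum_sum_type, Finset.univ_unique,
    Finset.sum_singleton, u2, w3', tidx, Sum.elim_inl, Sum.elim_inr, Pi.star_apply,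
    Pi.zero_apply, star_zero, RCLike.star_def, _root_.map_zero, Complex.conj_conj,
    mul_zero, zero_mul, add_zero, zero_add, Finset.sum_const_zero, Finset.mul_sum]
  exact Finset.sum_congr rfl fun x _ => by ring

lemma L7 (X : Matrix (TI k₁ k₂) (TI k₁ k₂) ℂ) (v : TI k₁ k₂ → ℂ) :
    (∑ a, (starRingEnd ℂ) (v (Sum.inl a)) * v (Sum.inl a)) *
        (∑ i, star (d2 i : TI k₁ k₂ → ℂ) ⬝ᵥ X *ᵥ d2 i) =
      ∑ x : Fin k₁, ∑ y : Fin k₂, (starRingEnd ℂ) (v (Sum.inl x)) *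
        X (Sum.inr (Sum.inl y)) (Sum.inr (Sum.inl y)) * v (Sum.inl x) := by
  simp only [d2_diag, Finset.sum_mul, Finset.mul_sum]
  rw [Finset.sum_comm]
  exact Finset.sum_congr rfl fun x _ => Finset.sum_congr rfl fun y _ => by ring

lemma L8 (X : Matrix (TI k₁ k₂) (TI k₁ k₂) ℂ) (v : TI k₁ k₂ → ℂ) :
    (∑ i, (starRingEnd ℂ) (v (Sum.inr (Sum.inl i))) * v (Sum.inr (Sum.inl i))) *
        (∑ a, star (d1 a : TI k₁ k₂ → ℂ) ⬝ᵥ X *ᵥ d1 a) =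
      ∑ x : Fin k₂, ∑ y : Fin k₁, (starRingEnd ℂ) (v (Sum.inr (Sum.inl x))) *
        X (Sum.inl y) (Sum.inl y) * v (Sum.inr (Sum.inl x)) := by
  simp only [d1_diag, Finset.sum_mul, Finset.mul_sum]
  rw [Finset.sum_comm]
  exact Finset.sum_congr rfl fun x _ => Finset.sum_congr rfl fun y _ => by ring

lemma quad_split (X : Matrix (TI k₁ k₂) (TI k₁ k₂) ℂ) (v : TI k₁ k₂ → ℂ) :
    star v ⬝ᵥ (phiMO k₁ k₂ X) *ᵥ v =
      star (u1 v) ⬝ᵥ X *ᵥ u1 v + star (u2 v) ⬝ᵥ X *ᵥ u2 v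
      + (star (u1 v) ⬝ᵥ X *ᵥ w3 v + star (w3 v) ⬝ᵥ X *ᵥ u1 v)
      + (star (w3' v) ⬝ᵥ X *ᵥ u2 v + star (u2 v) ⬝ᵥ X *ᵥ w3' v)
      + star (w3 v) ⬝ᵥ X *ᵥ w3 v
      + (∑ a, (starRingEnd ℂ) (v (Sum.inl a)) * v (Sum.inl a)) *
          (∑ i, star (d2 i) ⬝ᵥ X *ᵥ d2 i)
      + (∑ i, (starRingEnd ℂ) (v (Sum.inr (Sum.inl i))) * v (Sum.inr (Sum.inl i))) *
          (∑ a, star (d1 a) ⬝ᵥ X *ᵥ d1 a) := by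
  rw [tr22, L5, L6, L7, L8]
  have hd : (default : Unit) = () := rfl
  simp only [dotProduct, mulVec, Fintype.sum_sum_type, Finset.univ_unique,
    Finset.sum_singleton, u1, u2, w3, w3', d1, d2, phiMO, tidx, Matrix.of_apply,
    Sum.elim_inl, Sum.elim_inr, Pi.star_apply, Pi.zero_apply, star_zero,
    RCLike.star_def, _root_.map_zero, Complex.conj_conj, mul_zero, zero_mul, add_zero, zero_add,
    Finset.sum_const_zero, hd]
  simp only [add_mul, mul_add, ite_mul, mul_ite, zero_mul, mul_zero, one_mul, mul_one,
    Finset.sum_add_distrib, Finset.mul_sum, Finset.sum_mul, Finset.sum_ite_eq,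
    Finset.sum_ite_eq', Finset.mem_univ, if_true, add_zero, zero_add,
    Finset.sum_const_zero]
  ring_nf
  simp only [mul_comm, mul_left_comm, mul_assoc]
  ring

/-- The unit vector of the third block. -/
def w3one : TI k₁ k₂ → ℂ := Sum.elim 0 (Sum.elim 0 fun _ => 1)

lemma w3_eq (v : TI k₁ k₂ → ℂ) : w3 v = v tidx • w3one := by
  funext p
  rcases p with a | i | u <;> simp [w3, w3one, tidx]

lemma w3'_eq (v : TI k₁ k₂ → ℂ) : w3' v = (starRingEnd ℂ) (v tidx) • w3one := by
  funext p
  rcases p with a | i | u <;> simp [w3', w3one, tidx]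

lemma u1_eq (v : TI k₁ k₂ → ℂ) : u1 v = ∑ x, v (Sum.inl x) • d1 x := by
  funext p
  rcases p with a | i | u <;>
    simp [u1, d1, Finset.sum_apply, Pi.smul_apply, smul_eq_mul, mul_ite, mul_one, mul_zero,
      Finset.sum_ite_eq, Finset.sum_ite_eq', Finset.mem_univ]

lemma u2_eq (v : TI k₁ k₂ → ℂ) :
    u2 v = ∑ x, (starRingEnd ℂ) (v (Sum.inr (Sum.inl x))) • d2 x := by
  funext p
  rcases p with a | i | u <;>
    simp [u2, d2, Finset.sum_apply, Pi.smul_apply, smul_eq_mul, mul_ite, mul_one, mul_zero,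
      Finset.sum_ite_eq, Finset.sum_ite_eq', Finset.mem_univ]

lemma real_key (a a' s N₁ N₂ T₁ T₂ r₁ r₂ : ℝ)
    (ha : 0 ≤ a) (ha' : 0 ≤ a')
    (hN₁ : 0 ≤ N₁) (hN₂ : 0 ≤ N₂) (hT₁ : 0 ≤ T₁) (hT₂ : 0 ≤ T₂)
    (hr₁ : -(a*s) ≤ r₁) (hr₂ : -(a'*s) ≤ r₂)
    (hA : a^2 ≤ N₁*T₁) (hA' : a'^2 ≤ N₂*T₂) :
    0 ≤ a^2 + a'^2 + (2*r₁) + (2*r₂) + s^2 + N₁*T₂ + N₂*T₁ := by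
  have key : 2*(a*a') ≤ N₁*T₂ + N₂*T₁ := by
    have h4 : (2*(a*a'))^2 ≤ (N₁*T₂+N₂*T₁)^2 := by
      nlinarith [sq_nonneg (N₁*T₂ - N₂*T₁),
        mul_le_mul hA hA' (sq_nonneg a') (by positivity : (0:ℝ) ≤ N₁*T₁)]
    calc 2*(a*a') = Real.sqrt ((2*(a*a'))^2) := (Real.sqrt_sq (by positivity)).symm
      _ ≤ Real.sqrt ((N₁*T₂+N₂*T₁)^2) := Real.sqrt_le_sqrt h4
      _ = _ := Real.sqrt_sq (by positivity)
  nlinarith [sq_nonneg (s - a - a'), key]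

end S3

/-- The map `φ_{K₁,K₂}` is positive. -/
theorem statement3 (k₁ k₂ : ℕ) : IsPosMap (phiMO k₁ k₂) := by
  intro X hX
  have hE : ∀ p q, (starRingEnd ℂ) (X p q) = X q p := fun p q => by
    have h := congrFun (congrFun hX.1 q) p
    simpa [Matrix.conjTranspose_apply, RCLike.star_def] using h
  rw [Matrix.posSemidef_iff_dotProduct_mulVec]
  constructor
  · show (phiMO k₁ k₂ X)ᴴ = phiMO k₁ k₂ X
    ext p q
    rcases p with a | i | u <;> rcases q with b | j | u' <;>
      simp [Matrix.conjTranspose_apply, phiMO, tidx, RCLike.star_def, _root_.map_add,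
        apply_ite (starRingEnd ℂ), _root_.map_sum, _root_.map_zero, hE, eq_comm]
  · intro v
    open scoped MatrixOrder in obtain ⟨B, hB⟩ := CStarAlgebra.nonneg_iff_eq_star_mul_self.mp hX.nonneg
    rw [Matrix.star_eq_conjTranspose] at hB
    rw [S3.quad_split]
    set g : (TI k₁ k₂ → ℂ) → EuclideanSpace ℂ (TI k₁ k₂) :=
      fun u => (WithLp.linearEquiv 2 ℂ (TI k₁ k₂ → ℂ)).symm (B *ᵥ u) with hg
    have hip : ∀ u w : TI k₁ k₂ → ℂ, star u ⬝ᵥ X *ᵥ w = (inner ℂ (g u) (g w) : ℂ) := by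
      intro u w
      rw [hB, ← Matrix.mulVec_mulVec, Matrix.dotProduct_mulVec, ← Matrix.star_mulVec]
      simp [hg, PiLp.inner_apply, RCLike.inner_apply, dotProduct]
      simp only [mul_comm]
    simp only [hip]
    rw [show (inner ℂ (g (S3.w3 v)) (g (S3.u1 v)) : ℂ) = _ from (inner_conj_symm _ _).symm,
        show (inner ℂ (g (S3.u2 v)) (g (S3.w3' v)) : ℂ) = _ from (inner_conj_symm _ _).symm,
        Complex.add_conj, Complex.add_conj]
    have hN : ∀ z : ℂ, (starRingEnd ℂ) z * z = ((Complex.normSq z : ℝ) : ℂ) := fun z => by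
      rw [mul_comm, Complex.mul_conj]
    have hself : ∀ x : EuclideanSpace ℂ (TI k₁ k₂), (inner ℂ x x : ℂ) = ((‖x‖^2 : ℝ) : ℂ) :=
      fun x => by rw [inner_self_eq_norm_sq_to_K]; norm_num
    simp only [hN, hself]
    -- linearity of `g`
    have hgsmul : ∀ (c : ℂ) (u : TI k₁ k₂ → ℂ), g (c • u) = c • g u := fun c u => by
      simp [hg, Matrix.mulVec_smul]
    have hgsum : ∀ {m : Type} [Fintype m] (c : m → ℂ) (d : m → TI k₁ k₂ → ℂ),
        g (∑ x, c x • d x) = ∑ x, c x • g (d x) := by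
      intro m _ c d
      simp only [hg, ← Matrix.mulVecLin_apply, _root_.map_sum, _root_.map_smul]
    -- norm bounds
    have hww : ‖g (S3.w3' v)‖ = ‖g (S3.w3 v)‖ := by
      rw [S3.w3_eq, S3.w3'_eq, hgsmul, hgsmul, norm_smul, norm_smul, RCLike.norm_conj]
    have hr1 : -(‖g (S3.u1 v)‖ * ‖g (S3.w3 v)‖) ≤ (inner ℂ (g (S3.u1 v)) (g (S3.w3 v)) : ℂ).re := by
      have h1 := norm_inner_le_norm (𝕜 := ℂ) (g (S3.u1 v)) (g (S3.w3 v))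
      have h2 := Complex.abs_re_le_norm (inner ℂ (g (S3.u1 v)) (g (S3.w3 v)))
      have h3 := neg_abs_le ((inner ℂ (g (S3.u1 v)) (g (S3.w3 v)) : ℂ).re)
      linarith
    have hr2 : -(‖g (S3.u2 v)‖ * ‖g (S3.w3 v)‖) ≤ (inner ℂ (g (S3.w3' v)) (g (S3.u2 v)) : ℂ).re := by
      have h1 := norm_inner_le_norm (𝕜 := ℂ) (g (S3.w3' v)) (g (S3.u2 v))
      rw [hww] at h1
      have h2 := Complex.abs_re_le_norm (inner ℂ (g (S3.w3' v)) (g (S3.u2 v)))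
      have h3 := neg_abs_le ((inner ℂ (g (S3.w3' v)) (g (S3.u2 v)) : ℂ).re)
      nlinarith
    have hA : ‖g (S3.u1 v)‖^2 ≤
        (∑ x, Complex.normSq (v (Sum.inl x))) * (∑ x, ‖g (S3.d1 x)‖^2) := by
      have hg1 : g (S3.u1 v) = ∑ x, v (Sum.inl x) • g (S3.d1 x) := by
        rw [S3.u1_eq, hgsum]
      calc ‖g (S3.u1 v)‖^2 ≤ (∑ x, ‖v (Sum.inl x)‖ * ‖g (S3.d1 x)‖)^2 := by
            have h := (norm_sum_le Finset.univ fun x => v (Sum.inl x) • g (S3.d1 x)).trans_eq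
              (Finset.sum_congr rfl fun x _ => norm_smul _ _)
            rw [hg1]
            exact pow_le_pow_left₀ (norm_nonneg _) h 2
        _ ≤ (∑ x, ‖v (Sum.inl x)‖^2) * (∑ x, ‖g (S3.d1 x)‖^2) :=
            Finset.sum_mul_sq_le_sq_mul_sq _ _ _
        _ = _ := by
            simp_rw [Complex.sq_norm]
    have hA' : ‖g (S3.u2 v)‖^2 ≤
        (∑ x, Complex.normSq (v (Sum.inr (Sum.inl x)))) * (∑ x, ‖g (S3.d2 x)‖^2) := by
      have hg2 : g (S3.u2 v) = ∑ x, (starRingEnd ℂ) (v (Sum.inr (Sum.inl x))) • g (S3.d2 x) := by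
        rw [S3.u2_eq, hgsum]
      calc ‖g (S3.u2 v)‖^2 ≤ (∑ x, ‖v (Sum.inr (Sum.inl x))‖ * ‖g (S3.d2 x)‖)^2 := by
            have h := (norm_sum_le Finset.univ
                fun x => (starRingEnd ℂ) (v (Sum.inr (Sum.inl x))) • g (S3.d2 x)).trans_eq
              (Finset.sum_congr rfl fun x _ => by rw [norm_smul, RCLike.norm_conj])
            rw [hg2]
            exact pow_le_pow_left₀ (norm_nonneg _) h 2
        _ ≤ (∑ x, ‖v (Sum.inr (Sum.inl x))‖^2) * (∑ x, ‖g (S3.d2 x)‖^2) :=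
            Finset.sum_mul_sq_le_sq_mul_sq _ _ _
        _ = _ := by
            simp_rw [Complex.sq_norm]
    have hT1 : (0:ℝ) ≤ ∑ x, ‖g (S3.d1 x)‖^2 :=
      Finset.sum_nonneg fun x _ => sq_nonneg _
    have hT2 : (0:ℝ) ≤ ∑ x, ‖g (S3.d2 x)‖^2 :=
      Finset.sum_nonneg fun x _ => sq_nonneg _
    have hN1 : (0:ℝ) ≤ ∑ x, Complex.normSq (v (Sum.inl x)) :=
      Finset.sum_nonneg fun x _ => Complex.normSq_nonneg _
    have hN2 : (0:ℝ) ≤ ∑ x, Complex.normSq (v (Sum.inr (Sum.inl x))) :=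
      Finset.sum_nonneg fun x _ => Complex.normSq_nonneg _
    have := S3.real_key ‖g (S3.u1 v)‖ ‖g (S3.u2 v)‖ ‖g (S3.w3 v)‖
      (∑ x, Complex.normSq (v (Sum.inl x))) (∑ x, Complex.normSq (v (Sum.inr (Sum.inl x))))
      (∑ x, ‖g (S3.d1 x)‖^2) (∑ x, ‖g (S3.d2 x)‖^2)
      ((inner ℂ (g (S3.u1 v)) (g (S3.w3 v)) : ℂ).re) ((inner ℂ (g (S3.w3' v)) (g (S3.u2 v)) : ℂ).re)
      (norm_nonneg _) (norm_nonneg _) hN1 hN2 hT1 hT2 hr1 hr2 hA hA'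
    norm_cast

end Paper
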